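/- Let $E$ be a topological vector space with dual $E^*$, $C\subset E$ a convex cone, and $g:E\to\mathbb{R}\cup\{-\infty\}$ a proper concave function continuous at some point $x_0\in C$. Then $\sup_{x\in C}g(x)=\min_{y\in C^\circ}(-g_*(y))$, where $g_*(y)=\inf_{x\in E}(\langle x,y\rangle-g(x))$ and $C^\circ=\{y\in E^*: \langle x,y\rangle\le 0\ \forall x\in C\}$, and the minimum on the right-hand side is attained. -/

import Mathlib

open Set

set_option maxHeartbeats 1000000 in
/-- Fenchel's duality theorem (Rockafellar's version) for a convex cone `C`:
if a proper concave function `g` is continuous at some point of `C`, then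
`sup_{x ∈ C} g(x) = min_{y ∈ C°} (-g_*(y))` and the minimum is attained. -/
theorem fenchel_duality_cone {E : Type*} [AddCommGroup E] [Module ℝ E]
    [TopologicalSpace E] [IsTopologicalAddGroup E] [ContinuousSMul ℝ E]
    (C : Set E) (hCconv : Convex ℝ C)
    (hCcone : ∀ x ∈ C, ∀ c : ℝ, 0 ≤ c → c • x ∈ C)
    (g : E → EReal)
    (htop : ∀ x, g x < ⊤)
    (hconc : ∀ x y : E, ∀ a b : ℝ, 0 ≤ a → 0 ≤ b → a + b = 1 →
      (a : EReal) * g x + (b : EReal) * g y ≤ g (a • x + b • y))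
    (x₀ : E) (hx₀ : x₀ ∈ C) (hg₀ : ⊥ < g x₀) (hcont : ContinuousAt g x₀) :
    ∃ y : E →L[ℝ] ℝ, (∀ x ∈ C, y x ≤ 0) ∧
      (⨆ x ∈ C, g x) = -(⨅ x : E, (((y x : ℝ) : EReal) - g x)) ∧
      ∀ y' : E →L[ℝ] ℝ, (∀ x ∈ C, y' x ≤ 0) →
        -(⨅ x : E, (((y x : ℝ) : EReal) - g x))
          ≤ -(⨅ x : E, (((y' x : ℝ) : EReal) - g x)) := by
  set M : EReal := ⨆ x ∈ C, g x with hM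
  -- weak duality
  have weak : ∀ y' : E →L[ℝ] ℝ, (∀ x ∈ C, y' x ≤ 0) →
      M ≤ -(⨅ x : E, (((y' x : ℝ) : EReal) - g x)) := by
    intro y' hy'
    refine iSup₂_le fun x hx => ?_
    refine EReal.le_neg_of_le_neg ?_
    refine (iInf_le _ x).trans ?_
    have h1 : ((y' x : ℝ) : EReal) ≤ 0 := by
      exact_mod_cast EReal.coe_le_coe_iff.2 (hy' x hx)
    calc ((y' x : ℝ) : EReal) - g x ≤ 0 - g x := by
          exact add_le_add_left h1 _
      _ = -(g x) := by rw [zero_sub]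
  have hM_ne_bot : M ≠ ⊥ := by
    intro h
    have : g x₀ ≤ M := le_iSup₂ (f := fun x (_ : x ∈ C) => g x) x₀ hx₀
    rw [h] at this
    exact absurd (le_antisymm this bot_le) hg₀.ne'
  by_cases hMtop : M = ⊤
  · -- the supremum is `⊤`; `y = 0` works
    refine ⟨0, by simp, ?_, ?_⟩
    · have h := weak 0 (by simp)
      rw [hMtop] at h
      rw [hMtop, eq_comm, ← top_le_iff]
      exact h
    · intro y' hy'
      have h := weak 0 (by simp)
      have h' := weak y' hy'
      rw [hMtop, top_le_iff] at h h'
      rw [h, h']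
  -- main case : M is finite
  set r : ℝ := M.toReal with hr
  have hMr : (r : EReal) = M := EReal.coe_toReal hMtop hM_ne_bot
  -- g x₀ is finite
  set c₀ : ℝ := (g x₀).toReal with hc₀
  have hgx₀ : (c₀ : EReal) = g x₀ := EReal.coe_toReal (htop x₀).ne hg₀.ne'
  -- the strict hypograph of g
  set A : Set (E × ℝ) := {p : E × ℝ | ((p.2 : ℝ) : EReal) < g p.1} with hA
  have hAconv : Convex ℝ A := by
    rintro ⟨x, sx⟩ hxA ⟨z, sz⟩ hzA a b ha hb hab
    have hgx_ne_bot : g x ≠ ⊥ := fun h => by simp [hA, h] at hxA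
    have hgz_ne_bot : g z ≠ ⊥ := fun h => by simp [hA, h] at hzA
    set gx : ℝ := (g x).toReal with hgx'
    set gz : ℝ := (g z).toReal with hgz'
    have hgx : (gx : EReal) = g x := EReal.coe_toReal (htop x).ne hgx_ne_bot
    have hgz : (gz : EReal) = g z := EReal.coe_toReal (htop z).ne hgz_ne_bot
    have hxlt : sx < gx := by
      have := hxA; rw [hA, mem_setOf_eq, ← hgx] at this
      exact_mod_cast this
    have hzlt : sz < gz := by
      have := hzA; rw [hA, mem_setOf_eq, ← hgz] at this
      exact_mod_cast this
    show ((a • (x, sx) + b • (z, sz)).2 : EReal) < g (a • (x, sx) + b • (z, sz)).1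
    have hfst : (a • (x, sx) + b • (z, sz)).1 = a • x + b • z := rfl
    have hsnd : (a • (x, sx) + b • (z, sz)).2 = a * sx + b * sz := rfl
    rw [hfst, hsnd]
    have hreal : a * sx + b * sz < a * gx + b * gz := by
      rcases ha.lt_or_eq with ha' | ha'
      · nlinarith [mul_lt_mul_of_pos_left hxlt ha', mul_le_mul_of_nonneg_left hzlt.le hb]
      · have hb1 : b = 1 := by linarith
        simp [← ha', hb1, hzlt]
    calc ((a * sx + b * sz : ℝ) : EReal) < ((a * gx + b * gz : ℝ) : EReal) := by
          exact_mod_cast hreal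
      _ = (a : EReal) * g x + (b : EReal) * g z := by
          rw [← hgx, ← hgz]; push_cast; ring_nf
      _ ≤ g (a • x + b • z) := hconc x z a b ha hb hab
  -- A has nonempty interior
  have hz_int : ((x₀, c₀ - 2) : E × ℝ) ∈ interior A := by
    have hU : g ⁻¹' (Ioi ((c₀ - 1 : ℝ) : EReal)) ∈ nhds x₀ := by
      apply hcont
      apply Ioi_mem_nhds
      rw [← hgx₀]
      exact_mod_cast (by linarith : c₀ - 1 < c₀)
    rw [mem_interior]
    refine ⟨interior (g ⁻¹' (Ioi ((c₀ - 1 : ℝ) : EReal))) ×ˢ Iio (c₀ - 1), ?_, ?_, ?_⟩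
    · rintro ⟨x, t⟩ ⟨hx, ht⟩
      have hx' := interior_subset hx
      rw [Set.mem_preimage, Set.mem_Ioi] at hx'
      have ht' : ((t : ℝ) : EReal) < ((c₀ - 1 : ℝ) : EReal) := by
        exact_mod_cast ht
      exact lt_trans ht' hx'
    · exact isOpen_interior.prod isOpen_Iio
    · exact ⟨mem_interior_iff_mem_nhds.2 hU, by norm_num⟩
  -- the set above the supremum over the cone
  set B : Set (E × ℝ) := C ×ˢ Ici r with hB
  have hBconv : Convex ℝ B := hCconv.prod (convex_Ici r)
  have hdisj : Disjoint (interior A) B := by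
    rw [Set.disjoint_left]
    rintro ⟨x, t⟩ hpA ⟨hxC, hrt⟩
    have hpA' : ((x, t) : E × ℝ) ∈ A := interior_subset hpA
    rw [hA, mem_setOf_eq] at hpA'
    have hgxM : g x ≤ M := le_iSup₂ (f := fun x (_ : x ∈ C) => g x) x hxC
    have : ((t : ℝ) : EReal) < (r : EReal) := lt_of_lt_of_le hpA' (hMr ▸ hgxM)
    have : t < r := by exact_mod_cast this
    exact absurd hrt (not_le.2 this)
  obtain ⟨f, u, hfu, hub⟩ :=
    geometric_hahn_banach_open hAconv.interior isOpen_interior hBconv hdisj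
  -- decompose f
  set y₀ : E →L[ℝ] ℝ := f.comp (ContinuousLinearMap.inl ℝ E ℝ) with hy₀
  set s : ℝ := f (0, 1) with hs
  have hfdec : ∀ (x : E) (t : ℝ), f (x, t) = y₀ x + t * s := by
    intro x t
    have h1 : ((x, t) : E × ℝ) = (x, (0 : ℝ)) + t • ((0 : E), (1 : ℝ)) := by
      simp [Prod.ext_iff]
    rw [h1, map_add, map_smul, smul_eq_mul]
    rfl
  -- f ≤ u on all of A
  have hA_le : ∀ p ∈ A, f p ≤ u := by
    intro p hp
    set z : E × ℝ := (x₀, c₀ - 2) with hzdef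
    have key : ∀ t : ℝ, t ∈ Ioc (0 : ℝ) 1 → f p + t * (f z - f p) ≤ u := by
      intro t ht
      have hmem : p + t • (z - p) ∈ interior A :=
        hAconv.add_smul_sub_mem_interior hp hz_int ht
      have := (hfu _ hmem).le
      calc f p + t * (f z - f p) = f (p + t • (z - p)) := by
            rw [map_add, map_smul, map_sub, smul_eq_mul]
        _ ≤ u := this
    have htend : Filter.Tendsto (fun t : ℝ => f p + t * (f z - f p))
        (nhdsWithin 0 (Ioi 0)) (nhds (f p)) := by
      have hc : Continuous (fun t : ℝ => f p + t * (f z - f p)) :=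
        continuous_const.add (continuous_id.mul continuous_const)
      have := (hc.tendsto 0).mono_left (nhdsWithin_le_nhds (s := Ioi (0:ℝ)))
      simpa using this
    refine le_of_tendsto htend ?_
    filter_upwards [Ioc_mem_nhdsGT_of_mem ⟨le_rfl, zero_lt_one⟩] with t ht
    exact key t ht
  -- membership facts
  have h0C : (0 : E) ∈ C := by
    have := hCcone x₀ hx₀ 0 le_rfl
    rwa [zero_smul] at this
  have hurs : u ≤ r * s := by
    have : ((0 : E), r) ∈ B := ⟨h0C, Set.self_mem_Ici⟩
    have := hub _ this
    rwa [hfdec, map_zero, zero_add] at this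
  -- s > 0
  have hs_nonneg : 0 ≤ s := by
    by_contra h
    push_neg at h
    set t : ℝ := min (c₀ - 1) ((u + 1 - y₀ x₀) / s) with htdef
    have htA : ((x₀, t) : E × ℝ) ∈ A := by
      show ((t : ℝ) : EReal) < g x₀
      rw [← hgx₀]
      exact_mod_cast lt_of_le_of_lt (min_le_left _ _) (by linarith : c₀ - 1 < c₀)
    have hle := hA_le _ htA
    rw [hfdec] at hle
    have ht2 : t ≤ (u + 1 - y₀ x₀) / s := min_le_right _ _
    have : (u + 1 - y₀ x₀) / s * s ≤ t * s := mul_le_mul_of_nonpos_right ht2 h.le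
    rw [div_mul_cancel₀ _ h.ne] at this
    linarith
  have hs_pos : 0 < s := by
    rcases hs_nonneg.lt_or_eq with h | h
    · exact h
    · exfalso
      have h1 := hfu _ hz_int
      have h2 := hub (x₀, r) ⟨hx₀, Set.self_mem_Ici⟩
      rw [hfdec] at h1 h2
      rw [← h] at h1 h2
      linarith
  -- y₀ is nonnegative on C
  have hy₀C : ∀ x ∈ C, 0 ≤ y₀ x := by
    intro x hx
    by_contra h
    push_neg at h
    set c : ℝ := max 0 ((u - r * s - 1) / y₀ x) with hcdef
    have hc0 : 0 ≤ c := le_max_left _ _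
    have hcx : c • x ∈ C := hCcone x hx c hc0
    have := hub (c • x, r) ⟨hcx, Set.self_mem_Ici⟩
    rw [hfdec, map_smul, smul_eq_mul] at this
    have hc2 : (u - r * s - 1) / y₀ x ≤ c := le_max_right _ _
    have : c * y₀ x ≤ (u - r * s - 1) / y₀ x * y₀ x := mul_le_mul_of_nonpos_right hc2 h.le
    rw [div_mul_cancel₀ _ h.ne] at this
    linarith
  -- the dual point
  refine ⟨(-s⁻¹) • y₀, ?_, ?_, ?_⟩
  case _ =>
    intro x hx
    have h1 := hy₀C x hx
    have h2 : (0 : ℝ) ≤ s⁻¹ := inv_nonneg.2 hs_pos.le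
    show -s⁻¹ * y₀ x ≤ 0
    nlinarith
  case _ =>
    -- the main equality
    have hgle : ∀ x : E, g x ≤ ((r + -s⁻¹ * y₀ x : ℝ) : EReal) := by
      intro x
      by_cases hbot : g x = ⊥
      · rw [hbot]; exact bot_le
      · set gx : ℝ := (g x).toReal with hgx'
        have hgx : (gx : EReal) = g x := EReal.coe_toReal (htop x).ne hbot
        rw [← hgx, EReal.coe_le_coe_iff]
        by_contra hcon
        push_neg at hcon
        set t : ℝ := (r + -s⁻¹ * y₀ x + gx) / 2 with htdef
        have ht1 : t < gx := by
          rw [htdef]; linarith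
        have htA : ((x, t) : E × ℝ) ∈ A := by
          show ((t : ℝ) : EReal) < g x
          rw [← hgx]; exact_mod_cast ht1
        have hle := hA_le _ htA
        rw [hfdec] at hle
        have hts : r + -s⁻¹ * y₀ x < t := by rw [htdef]; linarith
        have hinv : s⁻¹ * s * y₀ x = y₀ x := by
          rw [inv_mul_cancel₀ hs_pos.ne', one_mul]
        nlinarith [mul_lt_mul_of_pos_right hts hs_pos, hinv]
    have hIge : ((-r : ℝ) : EReal) ≤ ⨅ x : E, ((((-s⁻¹) • y₀) x : ℝ) : EReal) - g x := by
      refine le_iInf fun x => ?_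
      have hyx : (((-s⁻¹) • y₀) x : ℝ) = -s⁻¹ * y₀ x := rfl
      rw [hyx]
      by_cases hbot : g x = ⊥
      · rw [hbot, sub_eq_add_neg, EReal.neg_bot, EReal.coe_add_top]
        exact le_top
      · set gx : ℝ := (g x).toReal with hgx'
        have hgx : (gx : EReal) = g x := EReal.coe_toReal (htop x).ne hbot
        have h1 : gx ≤ r + -s⁻¹ * y₀ x := by
          have := hgle x
          rw [← hgx, EReal.coe_le_coe_iff] at this
          exact this
        rw [← hgx]
        calc ((-r : ℝ) : EReal) ≤ ((-s⁻¹ * y₀ x - gx : ℝ) : EReal) := by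
              exact_mod_cast (by linarith : -r ≤ -s⁻¹ * y₀ x - gx)
          _ = ((-s⁻¹ * y₀ x : ℝ) : EReal) - (gx : EReal) := (EReal.coe_sub _ _)
    have hIle : -(⨅ x : E, ((((-s⁻¹) • y₀) x : ℝ) : EReal) - g x) ≤ M := by
      rw [← hMr]
      refine EReal.neg_le.mpr ?_
      rw [← EReal.coe_neg]
      exact hIge
    have hMle := weak ((-s⁻¹) • y₀) (by
      intro x hx
      have h1 := hy₀C x hx
      have h2 : (0 : ℝ) ≤ s⁻¹ := inv_nonneg.2 hs_pos.le
      show -s⁻¹ * y₀ x ≤ 0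
      nlinarith)
    exact le_antisymm hMle hIle
  case _ =>
    intro y' hy'
    have hgle : ∀ x : E, g x ≤ ((r + -s⁻¹ * y₀ x : ℝ) : EReal) := by
      intro x
      by_cases hbot : g x = ⊥
      · rw [hbot]; exact bot_le
      · set gx : ℝ := (g x).toReal with hgx'
        have hgx : (gx : EReal) = g x := EReal.coe_toReal (htop x).ne hbot
        rw [← hgx, EReal.coe_le_coe_iff]
        by_contra hcon
        push_neg at hcon
        set t : ℝ := (r + -s⁻¹ * y₀ x + gx) / 2 with htdef
        have ht1 : t < gx := by rw [htdef]; linarith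
        have htA : ((x, t) : E × ℝ) ∈ A := by
          show ((t : ℝ) : EReal) < g x
          rw [← hgx]; exact_mod_cast ht1
        have hle := hA_le _ htA
        rw [hfdec] at hle
        have hts : r + -s⁻¹ * y₀ x < t := by rw [htdef]; linarith
        have hinv : s⁻¹ * s * y₀ x = y₀ x := by
          rw [inv_mul_cancel₀ hs_pos.ne', one_mul]
        nlinarith [mul_lt_mul_of_pos_right hts hs_pos, hinv]
    have hIge : ((-r : ℝ) : EReal) ≤ ⨅ x : E, ((((-s⁻¹) • y₀) x : ℝ) : EReal) - g x := by
      refine le_iInf fun x => ?_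
      have hyx : (((-s⁻¹) • y₀) x : ℝ) = -s⁻¹ * y₀ x := rfl
      rw [hyx]
      by_cases hbot : g x = ⊥
      · rw [hbot, sub_eq_add_neg, EReal.neg_bot, EReal.coe_add_top]
        exact le_top
      · set gx : ℝ := (g x).toReal with hgx'
        have hgx : (gx : EReal) = g x := EReal.coe_toReal (htop x).ne hbot
        have h1 : gx ≤ r + -s⁻¹ * y₀ x := by
          have := hgle x
          rw [← hgx, EReal.coe_le_coe_iff] at this
          exact this
        rw [← hgx]
        calc ((-r : ℝ) : EReal) ≤ ((-s⁻¹ * y₀ x - gx : ℝ) : EReal) := by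
              exact_mod_cast (by linarith : -r ≤ -s⁻¹ * y₀ x - gx)
          _ = ((-s⁻¹ * y₀ x : ℝ) : EReal) - (gx : EReal) := (EReal.coe_sub _ _)
    have hIle : -(⨅ x : E, ((((-s⁻¹) • y₀) x : ℝ) : EReal) - g x) ≤ M := by
      rw [← hMr]
      refine EReal.neg_le.mpr ?_
      rw [← EReal.coe_neg]
      exact hIge
    exact hIle.trans (weak y' hy')
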